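/- Let V satisfy the basic assumptions with decay exponent a > 3/2. Then there exists a constant C > 0 such that for all n ≥ 2, ‖σ^∞ − σ^n‖²_{ℓ²(ℕ)} ≤ C n^{3−2a}. -/

import Mathlib

open Filter Set MeasureTheory
open scoped Classical ENNReal NNReal BigOperators

noncomputable section

/-- `lam V x` is λ(x) := inf_{(0,x)} V''. -/
def lam (V : ℝ → ℝ) (x : ℝ) : ℝ :=
  sInf (deriv (deriv V) '' Set.Ioo 0 x)

/-- The basic assumptions (Reg), (Sing), (Cvx), (Dec) on the interaction
potential `V`, with decay exponent `a`. -/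
structure BasicAssumptions (V : ℝ → ℝ) (a : ℝ) : Prop where
  nonneg : ∀ x : ℝ, 0 ≤ V x
  even : ∀ x : ℝ, V (-x) = V x
  pos : ∀ x : ℝ, x ≠ 0 → 0 < V x
  smooth : ContDiffOn ℝ 2 V {(0 : ℝ)}ᶜ
  sing : Filter.Tendsto V (nhdsWithin 0 {(0 : ℝ)}ᶜ) Filter.atTop
  cvx : ∀ x : ℝ, 0 < x → 0 < lam V x
  decV : Filter.Tendsto V Filter.atTop (nhds 0)
  decV' : Filter.Tendsto (deriv V) Filter.atTop (nhds 0)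
  one_lt_a : 1 < a
  decV'' : ∀ δ : ℝ, 0 < δ → ∃ c : ℝ, 0 < c ∧
    ∀ x : ℝ, δ ≤ |x| → deriv (deriv V) x ≤ c * |x| ^ (-(a + 2))

/-- The configuration space 𝒟_n. -/
def Dn (n : ℕ) : Set (Fin (n + 1) → ℝ) :=
  {x | x 0 = 0 ∧ x (Fin.last n) = 1 ∧ Monotone x}

/-- The energy E_n(x) := (1/n) Σ_{k=1}^{n} Σ_{j=0}^{n−k} V(n[x(j+k) − x(j)]),
valued in [0,∞], with the convention V(0) = +∞ from (Sing).  The double sum is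
written as a sum over all pairs q < p. -/
def En (V : ℝ → ℝ) (n : ℕ) (x : Fin (n + 1) → ℝ) : ℝ≥0∞ :=
  ENNReal.ofReal (1 / (n : ℝ)) *
    ∑ p : Fin (n + 1), ∑ q : Fin (n + 1),
      if (q : ℕ) < (p : ℕ) then
        (if x p = x q then ⊤ else ENNReal.ofReal (V ((n : ℝ) * (x p - x q))))
      else 0

/-- The first-order Taylor remainder φ_k(y) := V(k+y) − V(k) − V'(k)y. -/
def phi (V : ℝ → ℝ) (k y : ℝ) : ℝ :=
  V (k + y) - V k - deriv V k * y

/-- The lower-bound function Φ_k. -/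
def PhiLB (V : ℝ → ℝ) (k y : ℝ) : ℝ :=
  if y ≤ 1 then 1 / 2 * lam V (k + 1) * y ^ 2 else lam V (k + 1) * (y - 1 / 2)

/-- σ^n(i) := Σ_{k=i+1}^{n−i} min(k−i, n−i+1−k)|V'(k)| for 1 ≤ i ≤ ⌊n/2⌋,
and 0 otherwise. -/
def sigman (V : ℝ → ℝ) (n i : ℕ) : ℝ :=
  if 1 ≤ i ∧ i ≤ n / 2 then
    ∑ k ∈ Finset.Icc (i + 1) (n - i),
      ((min (k - i) (n + 1 - i - k) : ℕ) : ℝ) * |deriv V (k : ℝ)|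
  else 0

/-- σ^∞(i) := Σ_{k=i+1}^∞ (k−i)|V'(k)| for i ≥ 1 (index 0 is inert). -/
def sigmaInf (V : ℝ → ℝ) (i : ℕ) : ℝ :=
  if i = 0 then 0
  else ∑' m : ℕ, ((m + 1 : ℕ) : ℝ) * |deriv V ((i + 1 + m : ℕ) : ℝ)|

/-- Dom E_n^1 := {ε ∈ ℝ^n : −1 ≤ ε(i) ≤ n, Σ_{i=1}^n ε(i) = 0}, regarded as a
subset of ℓ²(ℕ) by extension by zero. -/
def DomEn1 (n : ℕ) : Set (ℕ → ℝ) :=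
  {ε | (∀ i, 1 ≤ i → i ≤ n → -1 ≤ ε i ∧ ε i ≤ (n : ℝ)) ∧
    (∀ i, i = 0 ∨ n < i → ε i = 0) ∧
    (∑ i ∈ Finset.Icc 1 n, ε i) = 0}

/-- The renormalised energy
E_n^1(ε) := Σ_{k=1}^{n} Σ_{j=0}^{n−k} [V(k + Σ_{l=j+1}^{j+k} ε(l)) − V(k)]. -/
def En1 (V : ℝ → ℝ) (n : ℕ) (ε : ℕ → ℝ) : ℝ :=
  ∑ k ∈ Finset.Icc 1 n, ∑ j ∈ Finset.range (n - k + 1),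
    (V ((k : ℝ) + ∑ l ∈ Finset.Icc (j + 1) (j + k), ε l) - V (k : ℝ))

/-- The quadratic-type part Q_n(ε) := Σ_{k=1}^{n} Σ_{j=0}^{n−k} φ_k(Σ_{l=j+1}^{k+j} ε(l)). -/
def Qn (V : ℝ → ℝ) (n : ℕ) (ε : ℕ → ℝ) : ℝ :=
  ∑ k ∈ Finset.Icc 1 n, ∑ j ∈ Finset.range (n - k + 1),
    phi V (k : ℝ) (∑ l ∈ Finset.Icc (j + 1) (j + k), ε l)

/-- The half truncation ε^{n,1/2}(i) := ε(i) for 1 ≤ i ≤ ⌈n/2⌉ and 0 otherwise. -/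
def half (n : ℕ) (ε : ℕ → ℝ) (i : ℕ) : ℝ :=
  if 1 ≤ i ∧ i ≤ (n + 1) / 2 then ε i else 0

/-- The reversal ε⃖(i) := ε(n+1−i) for 1 ≤ i ≤ n, extended by zero. -/
def rev (n : ℕ) (ε : ℕ → ℝ) (i : ℕ) : ℝ :=
  if 1 ≤ i ∧ i ≤ n then ε (n + 1 - i) else 0

/-- Dom E_∞^l := {ε ∈ ℓ²(ℕ) : ε(i) ≥ −1 for all i ≥ 1} (index 0 is inert). -/
def DomEinfl : Set (ℕ → ℝ) :=
  {ε | Summable (fun i => ε i ^ 2) ∧ ε 0 = 0 ∧ ∀ i, 1 ≤ i → -1 ≤ ε i}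

/-- Q_∞(ε) := Σ_{k=1}^∞ Σ_{j=0}^∞ φ_k(Σ_{l=j+1}^{k+j} ε(l)), valued in [0,∞]
(the summands are nonnegative). -/
def Qinf (V : ℝ → ℝ) (ε : ℕ → ℝ) : ℝ≥0∞ :=
  ∑' (k : ℕ) (j : ℕ),
    ENNReal.ofReal (phi V ((k : ℝ) + 1) (∑ l ∈ Finset.Icc (j + 1) (j + k + 1), ε l))

/-- The linear term (σ^∞, ε)_{ℓ²(ℕ)} as an extended real (difference of the
sums of the positive and negative parts). -/
def linPart (V : ℝ → ℝ) (ε : ℕ → ℝ) : EReal :=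
  ((∑' i : ℕ, ENNReal.ofReal (sigmaInf V i * ε i) : ℝ≥0∞) : EReal) -
    ((∑' i : ℕ, ENNReal.ofReal (-(sigmaInf V i * ε i)) : ℝ≥0∞) : EReal)

/-- The limit boundary-layer energy E_∞^l(ε) := Q_∞(ε) + (σ^∞, ε), valued in
the extended reals. -/
def Einfl (V : ℝ → ℝ) (ε : ℕ → ℝ) : EReal :=
  (Qinf V ε : EReal) + linPart V ε

end


section Aux1

open Filter

variable {V : ℝ → ℝ} {a : ℝ}

lemma deriv2_pos (h : BasicAssumptions V a) {x : ℝ} (hx : 0 < x) :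
    0 < deriv (deriv V) x := by
  have hmem : deriv (deriv V) x ∈ deriv (deriv V) '' Set.Ioo 0 (x + 1) :=
    ⟨x, ⟨hx, by linarith⟩, rfl⟩
  have hlam := h.cvx (x + 1) (by linarith)
  unfold lam at hlam
  by_cases hb : BddBelow (deriv (deriv V) '' Set.Ioo 0 (x + 1))
  · exact lt_of_lt_of_le hlam (csInf_le hb hmem)
  · rw [Real.sInf_of_not_bddBelow hb] at hlam; exact absurd hlam (lt_irrefl 0)

lemma derivV_contDiffOn (h : BasicAssumptions V a) :
    ContDiffOn ℝ 1 (deriv V) {(0:ℝ)}ᶜ :=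
  h.smooth.deriv_of_isOpen isOpen_compl_singleton (by norm_num)

lemma derivV_diffAt (h : BasicAssumptions V a) {x : ℝ} (hx : x ≠ 0) :
    DifferentiableAt ℝ (deriv V) x :=
  ((derivV_contDiffOn h).differentiableOn one_ne_zero).differentiableAt
    (isOpen_compl_singleton.mem_nhds hx)

lemma derivV_mono (h : BasicAssumptions V a) : MonotoneOn (deriv V) (Set.Ioi 0) := by
  apply monotoneOn_of_deriv_nonneg (convex_Ioi 0)
  · exact ((derivV_contDiffOn h).continuousOn).mono (fun x hx => (ne_of_gt hx : x ≠ 0))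
  · rw [interior_Ioi]
    exact fun x hx => (derivV_diffAt h (ne_of_gt hx)).differentiableWithinAt
  · rw [interior_Ioi]
    exact fun x hx => (deriv2_pos h hx).le

lemma derivV_nonpos (h : BasicAssumptions V a) {x : ℝ} (hx : 0 < x) : deriv V x ≤ 0 := by
  refine ge_of_tendsto h.decV' ?_
  filter_upwards [eventually_ge_atTop x] with y hy
  exact derivV_mono h hx (lt_of_lt_of_le hx hy) hy

lemma derivV_bound (h : BasicAssumptions V a) :
    ∃ B : ℝ, 0 < B ∧ ∀ x : ℝ, 1 ≤ x → |deriv V x| ≤ B * x ^ (-(a+1)) := by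
  obtain ⟨c, hc, hcb⟩ := h.decV'' 1 one_pos
  have ha1 : (0:ℝ) < a + 1 := by linarith [h.one_lt_a]
  refine ⟨c / (a+1), div_pos hc ha1, fun x hx => ?_⟩
  set B := c / (a + 1) with hBdef
  set g : ℝ → ℝ := fun y => deriv V y + B * y ^ (-(a+1)) with hg
  have key : ∀ y : ℝ, 0 < y →
      HasDerivAt g (deriv (deriv V) y + B * (-(a+1) * y ^ (-(a+1) - 1))) y := fun y hy =>
    ((derivV_diffAt h (ne_of_gt hy)).hasDerivAt).add
      ((Real.hasDerivAt_rpow_const (Or.inl (ne_of_gt hy))).const_mul B)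
  have hganti : AntitoneOn g (Set.Ici 1) := by
    apply antitoneOn_of_deriv_nonpos (convex_Ici 1)
    · exact fun y hy =>
        (key y (lt_of_lt_of_le one_pos hy)).continuousAt.continuousWithinAt
    · rw [interior_Ici]
      exact fun y hy =>
        (key y (lt_trans one_pos hy)).differentiableAt.differentiableWithinAt
    · rw [interior_Ici]
      intro y hy
      have hy1 : (1:ℝ) < y := hy
      have hy0 : (0:ℝ) < y := lt_trans one_pos hy1
      rw [(key y hy0).deriv]
      have h2 : deriv (deriv V) y ≤ c * y ^ (-(a+2)) := by
        have := hcb y (by rw [abs_of_pos hy0]; linarith)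
        rwa [abs_of_pos hy0] at this
      have h3 : B * (-(a+1) * y ^ (-(a+1) - 1)) = -(c * y ^ (-(a+2))) := by
        have he : -(a+1) - 1 = -(a+2) := by ring
        rw [he, hBdef]
        field_simp
      rw [h3]
      linarith
  have hlim : Tendsto g atTop (nhds 0) := by
    have h1 : Tendsto (fun y : ℝ => B * y ^ (-(a+1))) atTop (nhds (B * 0)) :=
      (tendsto_rpow_neg_atTop ha1).const_mul B
    have h2 := h.decV'.add h1
    rw [show (0:ℝ) + B * 0 = 0 by ring] at h2
    exact h2
  have h0 : 0 ≤ g x := by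
    refine le_of_tendsto hlim ?_
    filter_upwards [eventually_ge_atTop x] with y hy
    exact hganti hx (le_trans hx hy) hy
  have hneg : deriv V x ≤ 0 := derivV_nonpos h (by linarith)
  rw [abs_of_nonpos hneg]
  simp only [hg] at h0
  linarith

end Aux1
section Aux2

lemma rpow_mvt {s : ℝ} (hs : 1 < s) {x : ℝ} (hx : 1 ≤ x) :
    (s - 1) * (x + 1) ^ (-s) ≤ x ^ (1 - s) - (x + 1) ^ (1 - s) := by
  have hx0 : (0:ℝ) < x := lt_of_lt_of_le one_pos hx
  obtain ⟨ξ, hξ, heq⟩ := exists_hasDerivAt_eq_slope (fun t => t ^ (1 - s))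
      (fun t => (1 - s) * t ^ (1 - s - 1)) (by linarith : x < x + 1)
      (fun t ht => (Real.continuousAt_rpow_const t (1 - s)
        (Or.inl (ne_of_gt (lt_of_lt_of_le hx0 ht.1)))).continuousWithinAt)
      (fun t ht => Real.hasDerivAt_rpow_const (Or.inl (ne_of_gt (lt_trans hx0 ht.1))))
  have hξ0 : 0 < ξ := lt_trans hx0 hξ.1
  have hd : x + 1 - x = 1 := by ring
  rw [hd, div_one] at heq
  have he : 1 - s - 1 = -s := by ring
  rw [he] at heq
  have hmono : (x + 1) ^ (-s) ≤ ξ ^ (-s) :=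
    Real.rpow_le_rpow_of_nonpos hξ0 hξ.2.le (by linarith)
  have := mul_le_mul_of_nonneg_left hmono (by linarith : 0 ≤ s - 1)
  -- heq : (1-s) * ξ ^ (-s) = (x+1)^(1-s) - x^(1-s)
  nlinarith [this, heq]

lemma tsum_rpow_tail {s : ℝ} (hs : 1 < s) {N : ℕ} (hN : 1 ≤ N) :
    Summable (fun m : ℕ => ((N + 1 + m : ℕ) : ℝ) ^ (-s)) ∧
      ∑' m : ℕ, ((N + 1 + m : ℕ) : ℝ) ^ (-s) ≤ (N : ℝ) ^ (1 - s) / (s - 1) := by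
  have hs1 : (0:ℝ) < s - 1 := by linarith
  have hnonneg : ∀ m : ℕ, 0 ≤ ((N + 1 + m : ℕ) : ℝ) ^ (-s) :=
    fun m => Real.rpow_nonneg (Nat.cast_nonneg _) _
  set F : ℕ → ℝ := fun m => ((N + m : ℕ) : ℝ) ^ (1 - s) with hF
  have key : ∀ n : ℕ, ∑ m ∈ Finset.range n, ((N + 1 + m : ℕ) : ℝ) ^ (-s)
      ≤ (N : ℝ) ^ (1 - s) / (s - 1) := by
    intro n
    have hterm : ∀ m : ℕ, ((N + 1 + m : ℕ) : ℝ) ^ (-s) ≤ (F m - F (m + 1)) / (s - 1) := by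
      intro m
      have hx : (1:ℝ) ≤ ((N + m : ℕ) : ℝ) := by
        exact_mod_cast le_trans hN (Nat.le_add_right N m)
      have hm := rpow_mvt hs hx
      have hc1 : ((N + 1 + m : ℕ) : ℝ) = ((N + m : ℕ) : ℝ) + 1 := by push_cast; ring
      have hc2 : ((N + (m + 1) : ℕ) : ℝ) = ((N + m : ℕ) : ℝ) + 1 := by push_cast; ring
      rw [hF]
      simp only [hc1, hc2]
      rw [le_div_iff₀ hs1]
      nlinarith [hm]
    calc ∑ m ∈ Finset.range n, ((N + 1 + m : ℕ) : ℝ) ^ (-s)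
        ≤ ∑ m ∈ Finset.range n, (F m - F (m + 1)) / (s - 1) :=
          Finset.sum_le_sum (fun m _ => hterm m)
      _ = (∑ m ∈ Finset.range n, (F m - F (m + 1))) / (s - 1) := by
          rw [Finset.sum_div]
      _ = (F 0 - F n) / (s - 1) := by rw [Finset.sum_range_sub' F]
      _ ≤ F 0 / (s - 1) := by
          have h0 : 0 ≤ F n := Real.rpow_nonneg (Nat.cast_nonneg _) _
          gcongr
          linarith
      _ = (N : ℝ) ^ (1 - s) / (s - 1) := by simp [hF]
  exact ⟨summable_of_sum_range_le hnonneg key, Real.tsum_le_of_sum_range_le hnonneg key⟩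

end Aux2
section Aux3

variable {V : ℝ → ℝ} {a B : ℝ}

/-- The summand of `sigmaInf`. -/
noncomputable def gfun (V : ℝ → ℝ) (i m : ℕ) : ℝ := ((m + 1 : ℕ) : ℝ) * |deriv V ((i + 1 + m : ℕ) : ℝ)|

lemma gfun_nonneg (V : ℝ → ℝ) (i m : ℕ) : 0 ≤ gfun V i m := by
  unfold gfun; positivity

/-- generic term bound -/
lemma term_le (hB : ∀ k : ℕ, 1 ≤ k → |deriv V (k:ℝ)| ≤ B * (k:ℝ) ^ (-(a+1)))
    (hB0 : 0 ≤ B) {p q : ℕ} (hpq : p ≤ q) (hq : 1 ≤ q) :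
    (p : ℝ) * |deriv V (q : ℝ)| ≤ B * (q : ℝ) ^ (-a) := by
  have hq0 : (0:ℝ) < (q:ℝ) := by exact_mod_cast hq
  have h1 := hB q hq
  have hco : (p:ℝ) ≤ (q:ℝ) := by exact_mod_cast hpq
  calc (p : ℝ) * |deriv V (q : ℝ)| ≤ (q:ℝ) * (B * (q:ℝ) ^ (-(a+1))) :=
        mul_le_mul hco h1 (abs_nonneg _) hq0.le
    _ = B * (q:ℝ) ^ (-a) := by
        have h2 : (q:ℝ) ^ (1 + -(a+1)) = (q:ℝ) * (q:ℝ) ^ (-(a+1)) := by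
          rw [Real.rpow_add hq0, Real.rpow_one]
        have h3 : (1 : ℝ) + -(a+1) = -a := by ring
        rw [h3] at h2
        rw [h2]; ring

lemma gfun_le (hB : ∀ k : ℕ, 1 ≤ k → |deriv V (k:ℝ)| ≤ B * (k:ℝ) ^ (-(a+1)))
    (hB0 : 0 ≤ B) (i m : ℕ) : gfun V i m ≤ B * ((i + 1 + m : ℕ) : ℝ) ^ (-a) :=
  term_le hB hB0 (by omega) (by omega)

lemma gfun_summable (hB : ∀ k : ℕ, 1 ≤ k → |deriv V (k:ℝ)| ≤ B * (k:ℝ) ^ (-(a+1)))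
    (hB0 : 0 ≤ B) (ha : 1 < a) {i : ℕ} (hi : 1 ≤ i) : Summable (gfun V i) := by
  have ht := (tsum_rpow_tail ha hi).1
  exact Summable.of_nonneg_of_le (gfun_nonneg V i) (gfun_le hB hB0 i) (ht.mul_left B)

lemma sigmaInf_eq_tsum {i : ℕ} (hi : i ≠ 0) : sigmaInf V i = ∑' m, gfun V i m := by
  rw [sigmaInf, if_neg hi]; rfl

lemma gfun_tail_le (hB : ∀ k : ℕ, 1 ≤ k → |deriv V (k:ℝ)| ≤ B * (k:ℝ) ^ (-(a+1)))
    (hB0 : 0 ≤ B) (ha : 1 < a) {i : ℕ} (hi : 1 ≤ i) (K : ℕ) :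
    ∑' m : ℕ, gfun V i (m + K) ≤ B / (a - 1) * ((i + K : ℕ) : ℝ) ^ (1 - a) := by
  have hiK : 1 ≤ i + K := by omega
  have hterm : ∀ m : ℕ, gfun V i (m + K) ≤ B * (((i + K) + 1 + m : ℕ) : ℝ) ^ (-a) := by
    intro m
    have hidx : (i + 1 + (m + K) : ℕ) = ((i + K) + 1 + m : ℕ) := by omega
    unfold gfun
    rw [hidx]
    exact term_le hB hB0 (by omega) (by omega)
  have hsum : Summable (fun m => gfun V i (m + K)) :=
    (summable_nat_add_iff K).2 (gfun_summable hB hB0 ha hi)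
  have htail := tsum_rpow_tail ha hiK
  calc ∑' m : ℕ, gfun V i (m + K)
      ≤ ∑' m : ℕ, B * (((i + K) + 1 + m : ℕ) : ℝ) ^ (-a) :=
        Summable.tsum_le_tsum hterm hsum (htail.1.mul_left B)
    _ = B * ∑' m : ℕ, (((i + K) + 1 + m : ℕ) : ℝ) ^ (-a) := tsum_mul_left
    _ ≤ B * (((i + K : ℕ) : ℝ) ^ (1 - a) / (a - 1)) := by
        apply mul_le_mul_of_nonneg_left htail.2 hB0
    _ = B / (a - 1) * ((i + K : ℕ) : ℝ) ^ (1 - a) := by ring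

lemma sigmaInf_le (hB : ∀ k : ℕ, 1 ≤ k → |deriv V (k:ℝ)| ≤ B * (k:ℝ) ^ (-(a+1)))
    (hB0 : 0 ≤ B) (ha : 1 < a) {i : ℕ} (hi : 1 ≤ i) :
    sigmaInf V i ≤ B / (a - 1) * (i : ℝ) ^ (1 - a) := by
  have := gfun_tail_le hB hB0 ha hi 0
  simp only [Nat.add_zero] at this
  rwa [sigmaInf_eq_tsum (by omega)]

lemma sigmaInf_nonneg (V : ℝ → ℝ) (i : ℕ) : 0 ≤ sigmaInf V i := by
  unfold sigmaInf
  split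
  · exact le_refl 0
  · exact tsum_nonneg (fun m => by positivity)

lemma sigman_nonneg (V : ℝ → ℝ) (n i : ℕ) : 0 ≤ sigman V n i := by
  unfold sigman
  split
  · exact Finset.sum_nonneg (fun k _ => by positivity)
  · exact le_refl 0

end Aux3
section Aux4

variable {V : ℝ → ℝ} {a B : ℝ}

lemma sigman_eq {n i : ℕ} (hc : 1 ≤ i ∧ i ≤ n / 2) :
    sigman V n i = ∑ m ∈ Finset.range (n - i + 1 - (i + 1)),
      ((min ((i + 1 + m) - i) (n + 1 - i - (i + 1 + m)) : ℕ) : ℝ) *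
        |deriv V ((i + 1 + m : ℕ) : ℝ)| := by
  rw [sigman, if_pos hc, ← Finset.Ico_add_one_right_eq_Icc, Finset.sum_Ico_eq_sum_range]

lemma sigman_le_sigmaInf (hB : ∀ k : ℕ, 1 ≤ k → |deriv V (k:ℝ)| ≤ B * (k:ℝ) ^ (-(a+1)))
    (hB0 : 0 ≤ B) (ha : 1 < a) (n i : ℕ) : sigman V n i ≤ sigmaInf V i := by
  by_cases hc : 1 ≤ i ∧ i ≤ n / 2
  · rw [sigman_eq hc, sigmaInf_eq_tsum (by omega)]
    refine le_trans (Finset.sum_le_sum (fun m _ => ?_))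
      (Summable.sum_le_tsum _ (fun m _ => gfun_nonneg V i m) (gfun_summable hB hB0 ha hc.1))
    have hco : ((min ((i + 1 + m) - i) (n + 1 - i - (i + 1 + m)) : ℕ) : ℝ)
        ≤ ((m + 1 : ℕ) : ℝ) := by
      have : (min ((i + 1 + m) - i) (n + 1 - i - (i + 1 + m)) : ℕ) ≤ m + 1 := by omega
      exact_mod_cast this
    exact mul_le_mul_of_nonneg_right hco (abs_nonneg _)
  · rw [sigman, if_neg hc]
    exact sigmaInf_nonneg V i

lemma diff_le_mid (hB : ∀ k : ℕ, 1 ≤ k → |deriv V (k:ℝ)| ≤ B * (k:ℝ) ^ (-(a+1)))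
    (hB0 : 0 ≤ B) (ha : 1 < a) {n i : ℕ} (hi1 : 1 ≤ i) (hi2 : i ≤ n / 2) :
    sigmaInf V i - sigman V n i ≤ B / (a - 1) * (((n + 1) / 2 : ℕ) : ℝ) ^ (1 - a) := by
  set K := (n + 1) / 2 - i with hK
  have hiK : i + K = (n + 1) / 2 := by omega
  have hsplit := (gfun_summable hB hB0 ha hi1).sum_add_tsum_nat_add K
  have hlow : ∑ m ∈ Finset.range K, gfun V i m ≤ sigman V n i := by
    rw [sigman_eq ⟨hi1, hi2⟩]
    have hsub : Finset.range K ⊆ Finset.range (n - i + 1 - (i + 1)) :=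
      Finset.range_subset_range.2 (by omega)
    refine le_trans ?_
      (Finset.sum_le_sum_of_subset_of_nonneg hsub (fun m _ _ => by positivity))
    apply Finset.sum_le_sum
    intro m hm
    have hmK : m < K := Finset.mem_range.1 hm
    have hmin : (min ((i + 1 + m) - i) (n + 1 - i - (i + 1 + m)) : ℕ) = m + 1 := by omega
    rw [hmin]
    exact le_refl _
  have htail := gfun_tail_le hB hB0 ha hi1 K
  rw [hiK] at htail
  rw [sigmaInf_eq_tsum (by omega)]
  linarith

end Aux4


section FinAux

lemma sq_rpow {x : ℝ} (hx : 0 ≤ x) (p : ℝ) : (x ^ p) ^ 2 = x ^ (2 * p) := by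
  rw [← Real.rpow_natCast (x ^ p) 2, ← Real.rpow_mul hx]
  congr 1
  push_cast
  ring

lemma div_rpow_eq {n c p : ℝ} (hn : 0 ≤ n) (hc : 0 < c) :
    (n / c) ^ p = n ^ p * c ^ (-p) := by
  rw [Real.div_rpow hn hc.le, Real.rpow_neg hc.le, div_eq_mul_inv]

end FinAux

set_option maxHeartbeats 1000000 in
/-- quantitative ℓ²-convergence rate
‖σ^∞ − σ^n‖²_{ℓ²(ℕ)} ≤ C n^{3−2a} for all n ≥ 2. -/
theorem statement7 (V : ℝ → ℝ) (a : ℝ) (h : BasicAssumptions V a)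
    (ha : 3 / 2 < a) :
    ∃ C : ℝ, 0 < C ∧ ∀ n : ℕ, 2 ≤ n →
      ∑' i : ℕ, (sigmaInf V i - sigman V n i) ^ 2 ≤ C * (n : ℝ) ^ (3 - 2 * a) := by
  have ha1 : 1 < a := h.one_lt_a
  obtain ⟨B, hB0, hBx⟩ := derivV_bound h
  have hB : ∀ k : ℕ, 1 ≤ k → |deriv V (k:ℝ)| ≤ B * (k:ℝ) ^ (-(a+1)) :=
    fun k hk => hBx k (by exact_mod_cast hk)
  set C0 := B / (a - 1) with hC0
  have hC0pos : 0 < C0 := div_pos hB0 (by linarith)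
  have h2a : (1:ℝ) < 2 * a - 2 := by linarith
  have h2a3 : (0:ℝ) < 2 * a - 3 := by linarith
  refine ⟨C0 ^ 2 * ((2:ℝ) ^ (2*a-2) + (4:ℝ) ^ (2*a-3) / (2*a-3)), by positivity, ?_⟩
  intro n hn
  have hnpos : (0:ℝ) < (n:ℝ) := by exact_mod_cast (by omega : 0 < n)
  -- pointwise facts
  have hDnn : ∀ i, 0 ≤ sigmaInf V i - sigman V n i := fun i =>
    sub_nonneg.2 (sigman_le_sigmaInf hB hB0.le ha1 n i)
  have hDall : ∀ i : ℕ, 1 ≤ i → sigmaInf V i - sigman V n i ≤ C0 * (i:ℝ) ^ (1-a) := by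
    intro i hi
    have h1 := sigman_nonneg V n i
    have h2 := sigmaInf_le hB hB0.le ha1 hi
    rw [← hC0] at h2
    linarith
  have hsq : ∀ i : ℕ, (sigmaInf V i - sigman V n i) ^ 2 ≤ C0 ^ 2 * (i:ℝ) ^ (-(2*a-2)) := by
    intro i
    rcases Nat.eq_zero_or_pos i with h0 | hpos
    · subst h0
      have e1 : sigmaInf V 0 = 0 := by rw [sigmaInf, if_pos rfl]
      have e2 : sigman V n 0 = 0 := by rw [sigman, if_neg (by omega)]
      have hz : ((0:ℕ):ℝ) ^ (-(2*a-2)) = 0 := by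
        rw [Nat.cast_zero, Real.zero_rpow (by intro hz; linarith : -(2*a-2) ≠ (0:ℝ))]
      rw [e1, e2, hz]
      norm_num
    · have h2 : (sigmaInf V i - sigman V n i) ^ 2 ≤ (C0 * (i:ℝ) ^ (1-a)) ^ 2 :=
        pow_le_pow_left₀ (hDnn i) (hDall i hpos) 2
      refine le_trans h2 ?_
      rw [mul_pow, sq_rpow (Nat.cast_nonneg i)]
      rw [show (2:ℝ) * (1 - a) = -(2*a-2) by ring]
  have hsum : Summable (fun i : ℕ => (sigmaInf V i - sigman V n i) ^ 2) :=
    Summable.of_nonneg_of_le (fun i => sq_nonneg _) hsq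
      ((Real.summable_nat_rpow.2 (by linarith)).mul_left _)
  have hsplit := hsum.sum_add_tsum_nat_add (n / 2 + 1)
  rw [← hsplit]
  -- Block 1
  have hT'cast : (n:ℝ) / 2 ≤ (((n + 1) / 2 : ℕ) : ℝ) := by
    have : n ≤ 2 * ((n + 1) / 2) := by omega
    have h2 : (n:ℝ) ≤ 2 * (((n + 1) / 2 : ℕ) : ℝ) := by exact_mod_cast this
    linarith
  have he1 : (((n + 1) / 2 : ℕ) : ℝ) ^ (1 - a) ≤ ((n:ℝ) / 2) ^ (1 - a) :=
    Real.rpow_le_rpow_of_nonpos (by positivity) hT'cast (by linarith)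
  have hb1 : ∑ i ∈ Finset.range (n / 2 + 1), (sigmaInf V i - sigman V n i) ^ 2
      ≤ (n:ℝ) * (C0 * ((n:ℝ) / 2) ^ (1 - a)) ^ 2 := by
    have hbd : ∀ i ∈ Finset.range (n / 2 + 1),
        (sigmaInf V i - sigman V n i) ^ 2 ≤ (C0 * ((n:ℝ) / 2) ^ (1 - a)) ^ 2 := by
      intro i hi
      have him : i ≤ n / 2 := by
        have := Finset.mem_range.1 hi; omega
      rcases Nat.eq_zero_or_pos i with h0 | hpos
      · subst h0
        have e1 : sigmaInf V 0 = 0 := by rw [sigmaInf, if_pos rfl]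
        have e2 : sigman V n 0 = 0 := by rw [sigman, if_neg (by omega)]
        rw [e1, e2]
        norm_num
        positivity
      · have hm := diff_le_mid hB hB0.le ha1 hpos him
        rw [← hC0] at hm
        have hm2 : sigmaInf V i - sigman V n i ≤ C0 * ((n:ℝ) / 2) ^ (1 - a) :=
          le_trans hm (mul_le_mul_of_nonneg_left he1 hC0pos.le)
        exact pow_le_pow_left₀ (hDnn i) hm2 2
    calc ∑ i ∈ Finset.range (n / 2 + 1), (sigmaInf V i - sigman V n i) ^ 2
        ≤ ∑ _i ∈ Finset.range (n / 2 + 1), (C0 * ((n:ℝ) / 2) ^ (1 - a)) ^ 2 :=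
          Finset.sum_le_sum hbd
      _ = (n / 2 + 1 : ℕ) * (C0 * ((n:ℝ) / 2) ^ (1 - a)) ^ 2 := by
          rw [Finset.sum_const, Finset.card_range, nsmul_eq_mul]
      _ ≤ (n:ℝ) * (C0 * ((n:ℝ) / 2) ^ (1 - a)) ^ 2 := by
          have : (n / 2 + 1 : ℕ) ≤ n := by omega
          have hc : ((n / 2 + 1 : ℕ) : ℝ) ≤ (n:ℝ) := by exact_mod_cast this
          exact mul_le_mul_of_nonneg_right hc (by positivity)
  have hb1' : (n:ℝ) * (C0 * ((n:ℝ) / 2) ^ (1 - a)) ^ 2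
      = C0 ^ 2 * (2:ℝ) ^ (2*a-2) * (n:ℝ) ^ (3 - 2*a) := by
    rw [mul_pow, sq_rpow (by positivity : (0:ℝ) ≤ (n:ℝ)/2),
      div_rpow_eq hnpos.le (by norm_num : (0:ℝ) < 2)]
    rw [show -((2:ℝ) * (1 - a)) = 2*a-2 by ring, show (2:ℝ) * (1 - a) = 2 - 2*a by ring]
    have hmul : (n:ℝ) * (n:ℝ) ^ (2 - 2*a) = (n:ℝ) ^ (3 - 2*a) := by
      rw [show (3 - 2*a) = 1 + (2 - 2*a) by ring, Real.rpow_add hnpos, Real.rpow_one]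
    calc (n:ℝ) * (C0 ^ 2 * ((n:ℝ) ^ (2 - 2*a) * (2:ℝ) ^ (2*a-2)))
        = C0 ^ 2 * (2:ℝ) ^ (2*a-2) * ((n:ℝ) * (n:ℝ) ^ (2 - 2*a)) := by ring
      _ = C0 ^ 2 * (2:ℝ) ^ (2*a-2) * (n:ℝ) ^ (3 - 2*a) := by rw [hmul]
  -- Block 2
  have hT1 : 1 ≤ n / 2 := by omega
  have htail := tsum_rpow_tail h2a hT1
  have hb2 : ∑' m : ℕ, (sigmaInf V (m + (n / 2 + 1)) - sigman V n (m + (n / 2 + 1))) ^ 2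
      ≤ C0 ^ 2 * (((n / 2 : ℕ):ℝ) ^ (1 - (2*a-2)) / (2*a-2-1)) := by
    calc ∑' m : ℕ, (sigmaInf V (m + (n / 2 + 1)) - sigman V n (m + (n / 2 + 1))) ^ 2
        ≤ ∑' m : ℕ, C0 ^ 2 * ((n / 2 + 1 + m : ℕ):ℝ) ^ (-(2*a-2)) := by
          refine Summable.tsum_le_tsum (fun m => ?_) ((summable_nat_add_iff (n / 2 + 1)).2 hsum)
            (htail.1.mul_left _)
          have := hsq (m + (n / 2 + 1))
          have hidx : ((m + (n / 2 + 1) : ℕ):ℝ) = ((n / 2 + 1 + m : ℕ):ℝ) := by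
            push_cast; ring
          rwa [hidx] at this
      _ = C0 ^ 2 * ∑' m : ℕ, ((n / 2 + 1 + m : ℕ):ℝ) ^ (-(2*a-2)) := tsum_mul_left
      _ ≤ _ := mul_le_mul_of_nonneg_left htail.2 (by positivity)
  have hT4 : (n:ℝ) / 4 ≤ ((n / 2 : ℕ):ℝ) := by
    have : n ≤ 4 * (n / 2) := by omega
    have h4 : (n:ℝ) ≤ 4 * ((n / 2 : ℕ):ℝ) := by exact_mod_cast this
    linarith
  have hb2' : C0 ^ 2 * (((n / 2 : ℕ):ℝ) ^ (1 - (2*a-2)) / (2*a-2-1))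
      ≤ C0 ^ 2 * ((4:ℝ) ^ (2*a-3) / (2*a-3)) * (n:ℝ) ^ (3 - 2*a) := by
    have he2 : ((n / 2 : ℕ):ℝ) ^ (1 - (2*a-2)) ≤ ((n:ℝ) / 4) ^ (1 - (2*a-2)) :=
      Real.rpow_le_rpow_of_nonpos (by positivity) hT4 (by linarith)
    have he3 : ((n:ℝ) / 4) ^ (1 - (2*a-2)) = (n:ℝ) ^ (3 - 2*a) * (4:ℝ) ^ (2*a-3) := by
      rw [div_rpow_eq hnpos.le (by norm_num : (0:ℝ) < 4)]
      rw [show (1 - (2*a-2)) = 3 - 2*a by ring, show -((3:ℝ) - 2*a) = 2*a-3 by ring]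
    rw [he3] at he2
    have he4 : ((n / 2 : ℕ):ℝ) ^ (1 - (2*a-2)) / (2*a-2-1)
        ≤ (n:ℝ) ^ (3 - 2*a) * (4:ℝ) ^ (2*a-3) / (2*a-3) := by
      rw [show (2*a-2-1 : ℝ) = 2*a-3 by ring]
      gcongr
    calc C0 ^ 2 * (((n / 2 : ℕ):ℝ) ^ (1 - (2*a-2)) / (2*a-2-1))
        ≤ C0 ^ 2 * ((n:ℝ) ^ (3 - 2*a) * (4:ℝ) ^ (2*a-3) / (2*a-3)) :=
          mul_le_mul_of_nonneg_left he4 (by positivity)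
      _ = C0 ^ 2 * ((4:ℝ) ^ (2*a-3) / (2*a-3)) * (n:ℝ) ^ (3 - 2*a) := by ring
  calc ∑ i ∈ Finset.range (n / 2 + 1), (sigmaInf V i - sigman V n i) ^ 2
        + ∑' m : ℕ, (sigmaInf V (m + (n / 2 + 1)) - sigman V n (m + (n / 2 + 1))) ^ 2
      ≤ C0 ^ 2 * (2:ℝ) ^ (2*a-2) * (n:ℝ) ^ (3 - 2*a)
        + C0 ^ 2 * ((4:ℝ) ^ (2*a-3) / (2*a-3)) * (n:ℝ) ^ (3 - 2*a) := by
        have := le_trans hb2 hb2'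
        rw [hb1'] at hb1
        exact add_le_add hb1 this
    _ = C0 ^ 2 * ((2:ℝ) ^ (2*a-2) + (4:ℝ) ^ (2*a-3) / (2*a-3)) * (n:ℝ) ^ (3 - 2*a) := by
        ring
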